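/- The stochastic variational Euler scheme on ℝⁿ is characterized by stationarity of the discrete Hamilton–Pontryagin action sum: 𝔊_d^e is stationary at (q,v,p) with respect to all variations of q_j for 1 ≤ j ≤ N−1, of v_j for 1 ≤ j ≤ N−1, and of p_j for 1 ≤ j ≤ N (i.e. all the corresponding partial Fréchet derivatives of 𝔊_d^e vanish) if and only if the stochastic discrete Hamilton–Pontryagin equations hold: q_j = q_{j−1} + h v_j for 1 ≤ j ≤ N; p_j = (∂L/∂v)(q_j, v_j) for 1 ≤ j ≤ N−1; and p_{j+1} = p_j + h (∂L/∂q)(q_j, v_j) + Σ_{i=1}^m (∂γ_i/∂q)(q_j) b_i^j for 1 ≤ j ≤ N−1. -/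

import Mathlib

open scoped RealInnerProductSpace

/-- The discrete Hamilton–Pontryagin action sum
`𝔊_d^e(q,v,p) = ∑_{k=0}^{N-1} [ L(q_k,v_k) h + ∑_{i=1}^m γ_i(q_k) b_i^k
  + ⟨p_{k+1}, (q_{k+1} − q_k)/h − v_{k+1}⟩ h ]` on `ℝⁿ`. -/
noncomputable def discreteHPAction (n m N : ℕ) (h : ℝ)
    (L : EuclideanSpace ℝ (Fin n) × EuclideanSpace ℝ (Fin n) → ℝ)
    (γ : ℕ → EuclideanSpace ℝ (Fin n) → ℝ) (b : ℕ → ℕ → ℝ)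
    (q v p : ℕ → EuclideanSpace ℝ (Fin n)) : ℝ :=
  ∑ k ∈ Finset.range N,
    (L (q k, v k) * h + ∑ i ∈ Finset.range m, γ i (q k) * b i k
      + ⟪p (k + 1), h⁻¹ • (q (k + 1) - q k) - v (k + 1)⟫ * h)

set_option linter.unusedSectionVars false

variable {E : Type*} [NormedAddCommGroup E] [InnerProductSpace ℝ E] [CompleteSpace E]

theorem hasDerivAt_line (x u : E) : HasDerivAt (fun ε : ℝ => x + ε • u) u 0 := by
  simpa using ((hasDerivAt_id (0:ℝ)).smul_const u).const_add x

theorem hasDerivAt_grad_line (f : E → ℝ) (x u : E) (hf : DifferentiableAt ℝ f x) :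
    HasDerivAt (fun ε : ℝ => f (x + ε • u)) ⟪gradient f x, u⟫ 0 := by
  have h1 := hf.hasGradientAt.hasFDerivAt
  have h1' : HasFDerivAt f (InnerProductSpace.toDual ℝ E (gradient f x)) (x + (0:ℝ) • u) := by
    simpa using h1
  simpa [Function.comp_def] using h1'.comp_hasDerivAt 0 (hasDerivAt_line x u)

theorem hasDerivAt_inner_const (a : E) {c : ℝ → E} {c' : E} (hc : HasDerivAt c c' 0) :
    HasDerivAt (fun ε : ℝ => ⟪a, c ε⟫) ⟪a, c'⟫ 0 := by
  simpa [Function.comp_def] using (innerSL ℝ a).hasFDerivAt.comp_hasDerivAt 0 hc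

theorem hasDerivAt_action_p (n m N : ℕ) (h : ℝ)
    (L : EuclideanSpace ℝ (Fin n) × EuclideanSpace ℝ (Fin n) → ℝ)
    (γ : ℕ → EuclideanSpace ℝ (Fin n) → ℝ) (b : ℕ → ℕ → ℝ)
    (q v p : ℕ → EuclideanSpace ℝ (Fin n)) (j : ℕ) (hj1 : 1 ≤ j) (hjN : j ≤ N)
    (u : EuclideanSpace ℝ (Fin n)) :
    HasDerivAt (fun ε : ℝ => discreteHPAction n m N h L γ b q v
        (Function.update p j (p j + ε • u)))
      (⟪h⁻¹ • (q j - q (j - 1)) - v j, u⟫ * h) 0 := by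
  obtain ⟨j, rfl⟩ : ∃ j', j = j' + 1 := ⟨j - 1, (Nat.succ_pred_eq_of_pos hj1).symm⟩
  simp only [Nat.add_sub_cancel]
  set c : EuclideanSpace ℝ (Fin n) := h⁻¹ • (q (j + 1) - q j) - v (j + 1) with hc
  unfold discreteHPAction
  have key : HasDerivAt (fun ε : ℝ => ∑ k ∈ Finset.range N,
      (L (q k, v k) * h + ∑ i ∈ Finset.range m, γ i (q k) * b i k
        + ⟪Function.update p (j+1) (p (j+1) + ε • u) (k + 1),
            h⁻¹ • (q (k + 1) - q k) - v (k + 1)⟫ * h))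
      (∑ k ∈ Finset.range N, if k = j then ⟪c, u⟫ * h else 0) 0 := by
    refine HasDerivAt.fun_sum fun k hk => ?_
    by_cases hkj : k = j
    · subst hkj
      simp only [if_pos rfl, Function.update_self]
      have h2 : HasDerivAt (fun ε : ℝ => ⟪p (k+1) + ε • u, c⟫) ⟪c, u⟫ 0 := by
        have : (fun ε : ℝ => ⟪p (k+1) + ε • u, c⟫) = fun ε : ℝ => ⟪c, p (k+1) + ε • u⟫ := by
          funext ε; exact real_inner_comm _ _
        rw [this]
        exact hasDerivAt_inner_const c (hasDerivAt_line (p (k+1)) u)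
      exact (h2.mul_const h).const_add _
    · simp only [if_neg hkj, Function.update_of_ne (by omega : k + 1 ≠ j + 1)]
      exact hasDerivAt_const 0 _
  rw [Finset.sum_ite_eq' (Finset.range N) j (fun _ => ⟪c, u⟫ * h),
    if_pos (Finset.mem_range.mpr (by omega))] at key
  exact key

theorem hasDerivAt_action_v (n m N : ℕ) (h : ℝ)
    (L : EuclideanSpace ℝ (Fin n) × EuclideanSpace ℝ (Fin n) → ℝ) (hL : ContDiff ℝ 1 L)
    (γ : ℕ → EuclideanSpace ℝ (Fin n) → ℝ) (b : ℕ → ℕ → ℝ)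
    (q v p : ℕ → EuclideanSpace ℝ (Fin n)) (j : ℕ) (hj1 : 1 ≤ j) (hjN : j < N)
    (u : EuclideanSpace ℝ (Fin n)) :
    HasDerivAt (fun ε : ℝ => discreteHPAction n m N h L γ b q
        (Function.update v j (v j + ε • u)) p)
      (⟪gradient (fun w => L (q j, w)) (v j) - p j, u⟫ * h) 0 := by
  obtain ⟨j, rfl⟩ : ∃ j', j = j' + 1 := ⟨j - 1, (Nat.succ_pred_eq_of_pos hj1).symm⟩
  set G : EuclideanSpace ℝ (Fin n) := gradient (fun w => L (q (j+1), w)) (v (j+1)) with hG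
  unfold discreteHPAction
  have hdiff : DifferentiableAt ℝ (fun w => L (q (j+1), w)) (v (j+1)) :=
    (hL.differentiable one_ne_zero (q (j+1), v (j+1))).comp (v (j+1))
      ((differentiableAt_const _).prodMk differentiableAt_id)
  have key : HasDerivAt (fun ε : ℝ => ∑ k ∈ Finset.range N,
      (L (q k, Function.update v (j+1) (v (j+1) + ε • u) k) * h
        + ∑ i ∈ Finset.range m, γ i (q k) * b i k
        + ⟪p (k + 1), h⁻¹ • (q (k + 1) - q k)
            - Function.update v (j+1) (v (j+1) + ε • u) (k + 1)⟫ * h))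
      (∑ k ∈ Finset.range N, ((if k = j + 1 then ⟪G, u⟫ * h else 0)
        + (if k = j then -(⟪p (j+1), u⟫ * h) else 0))) 0 := by
    refine HasDerivAt.fun_sum fun k hk => ?_
    by_cases hkj : k = j + 1
    · subst hkj
      simp only [Function.update_self, if_pos rfl,
        Function.update_of_ne (by omega : j + 1 + 1 ≠ j + 1), if_neg (by omega : ¬ j + 1 = j)]
      have h2 : HasDerivAt (fun ε : ℝ => L (q (j+1), v (j+1) + ε • u)) ⟪G, u⟫ 0 :=
        hasDerivAt_grad_line (fun w => L (q (j+1), w)) (v (j+1)) u hdiff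
      simpa using (((h2.mul_const h).add_const (∑ i ∈ Finset.range m, γ i (q (j+1)) * b i (j+1))).add_const
        (⟪p (j+1+1), h⁻¹ • (q (j+1+1) - q (j+1)) - v (j+1+1)⟫ * h))
    · by_cases hkj' : k = j
      · subst hkj'
        simp only [Function.update_of_ne (by omega : k ≠ k + 1), Function.update_self,
          if_neg hkj, if_pos rfl]
        have hcurve : HasDerivAt (fun ε : ℝ =>
            h⁻¹ • (q (k + 1) - q k) - (v (k+1) + ε • u)) (-u) 0 := by
          simpa using (hasDerivAt_line (v (k+1)) u).const_sub (h⁻¹ • (q (k + 1) - q k))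
        have h2 := (hasDerivAt_inner_const (p (k+1)) hcurve).mul_const h
        have h3 := h2.const_add (L (q k, v k) * h + ∑ i ∈ Finset.range m, γ i (q k) * b i k)
        simpa [inner_neg_right, add_assoc] using h3
      · simp only [Function.update_of_ne (by omega : k ≠ j + 1),
          Function.update_of_ne (by omega : k + 1 ≠ j + 1), if_neg hkj, if_neg hkj']
        simpa using hasDerivAt_const (0:ℝ)
          (L (q k, v k) * h + ∑ i ∈ Finset.range m, γ i (q k) * b i k
            + ⟪p (k + 1), h⁻¹ • (q (k + 1) - q k) - v (k + 1)⟫ * h)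
  rw [Finset.sum_add_distrib, Finset.sum_ite_eq' (Finset.range N) (j+1),
    Finset.sum_ite_eq' (Finset.range N) j, if_pos (Finset.mem_range.mpr (by omega)),
    if_pos (Finset.mem_range.mpr (by omega))] at key
  have : (⟪G - p (j+1), u⟫ : ℝ) * h = ⟪G, u⟫ * h + -(⟪p (j+1), u⟫ * h) := by
    rw [inner_sub_left]; ring
  rw [this]
  exact key

theorem hasDerivAt_action_q (n m N : ℕ) (h : ℝ) (hh : h ≠ 0)
    (L : EuclideanSpace ℝ (Fin n) × EuclideanSpace ℝ (Fin n) → ℝ) (hL : ContDiff ℝ 1 L)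
    (γ : ℕ → EuclideanSpace ℝ (Fin n) → ℝ) (hγ : ∀ i < m, ContDiff ℝ 1 (γ i))
    (b : ℕ → ℕ → ℝ)
    (q v p : ℕ → EuclideanSpace ℝ (Fin n)) (j : ℕ) (hj1 : 1 ≤ j) (hjN : j < N)
    (u : EuclideanSpace ℝ (Fin n)) :
    HasDerivAt (fun ε : ℝ => discreteHPAction n m N h L γ b
        (Function.update q j (q j + ε • u)) v p)
      ⟪p j - p (j + 1) + h • gradient (fun x => L (x, v j)) (q j)
        + ∑ i ∈ Finset.range m, b i j • gradient (γ i) (q j), u⟫ 0 := by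
  obtain ⟨j, rfl⟩ : ∃ j', j = j' + 1 := ⟨j - 1, (Nat.succ_pred_eq_of_pos hj1).symm⟩
  set J := j + 1 with hJ
  set Gq : EuclideanSpace ℝ (Fin n) := gradient (fun x => L (x, v J)) (q J) with hGq
  unfold discreteHPAction
  have hdiff : DifferentiableAt ℝ (fun x => L (x, v J)) (q J) :=
    (hL.differentiable one_ne_zero (q J, v J)).comp (q J)
      (differentiableAt_id.prodMk (differentiableAt_const _))
  have key : HasDerivAt (fun ε : ℝ => ∑ k ∈ Finset.range N,
      (L (Function.update q J (q J + ε • u) k, v k) * h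
        + ∑ i ∈ Finset.range m, γ i (Function.update q J (q J + ε • u) k) * b i k
        + ⟪p (k + 1), h⁻¹ • (Function.update q J (q J + ε • u) (k + 1)
            - Function.update q J (q J + ε • u) k) - v (k + 1)⟫ * h))
      (∑ k ∈ Finset.range N,
        ((if k = J then (⟪Gq, u⟫ * h
            + (∑ i ∈ Finset.range m, ⟪gradient (γ i) (q J), u⟫ * b i J)
            + ⟪p (J + 1), h⁻¹ • (-u)⟫ * h) else 0)
        + (if k = j then ⟪p J, h⁻¹ • u⟫ * h else 0))) 0 := by
    refine HasDerivAt.fun_sum fun k hk => ?_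
    by_cases hkj : k = J
    · subst hkj
      simp only [Function.update_self, if_pos rfl, if_neg (by omega : ¬ J = j),
        Function.update_of_ne (by omega : J + 1 ≠ J)]
      have hA : HasDerivAt (fun ε : ℝ => L (q J + ε • u, v J)) ⟪Gq, u⟫ 0 :=
        hasDerivAt_grad_line (fun x => L (x, v J)) (q J) u hdiff
      have hB : HasDerivAt (fun ε : ℝ => ∑ i ∈ Finset.range m, γ i (q J + ε • u) * b i J)
          (∑ i ∈ Finset.range m, ⟪gradient (γ i) (q J), u⟫ * b i J) 0 := by
        refine HasDerivAt.fun_sum fun i hi => ?_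
        exact (hasDerivAt_grad_line (γ i) (q J) u
          ((hγ i (Finset.mem_range.mp hi)).differentiable one_ne_zero (q J))).mul_const _
      have hcurve : HasDerivAt (fun ε : ℝ =>
          h⁻¹ • (q (J + 1) - (q J + ε • u)) - v (J + 1)) (h⁻¹ • (-u)) 0 := by
        have c1 : HasDerivAt (fun ε : ℝ => q (J + 1) - (q J + ε • u)) (-u) 0 := by
          simpa using (hasDerivAt_line (q J) u).const_sub (q (J + 1))
        simpa using (c1.const_smul h⁻¹).sub_const (v (J + 1))
      have hC := (hasDerivAt_inner_const (p (J + 1)) hcurve).mul_const h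
      simpa using ((hA.mul_const h).fun_add hB).fun_add hC
    · by_cases hkj' : k = j
      · subst hkj'
        simp only [hJ, Function.update_of_ne (by omega : k ≠ k + 1), Function.update_self,
          if_neg (by omega : ¬ k = k + 1), if_pos rfl]
        have hcurve : HasDerivAt (fun ε : ℝ =>
            h⁻¹ • ((q (k + 1) + ε • u) - q k) - v (k + 1)) (h⁻¹ • u) 0 := by
          have c1 : HasDerivAt (fun ε : ℝ => (q (k + 1) + ε • u) - q k) u 0 := by
            simpa using (hasDerivAt_line (q (k + 1)) u).sub_const (q k)
          simpa using (c1.const_smul h⁻¹).sub_const (v (k + 1))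
        have h2 := (hasDerivAt_inner_const (p (k + 1)) hcurve).mul_const h
        have h3 := h2.const_add
          (L (q k, v k) * h + ∑ i ∈ Finset.range m, γ i (q k) * b i k)
        simpa [add_assoc] using h3
      · simp only [Function.update_of_ne (show k ≠ J by omega),
          Function.update_of_ne (show k + 1 ≠ J by omega), if_neg hkj, if_neg hkj']
        simpa using hasDerivAt_const (0:ℝ)
          (L (q k, v k) * h + ∑ i ∈ Finset.range m, γ i (q k) * b i k
            + ⟪p (k + 1), h⁻¹ • (q (k + 1) - q k) - v (k + 1)⟫ * h)
  rw [Finset.sum_add_distrib, Finset.sum_ite_eq' (Finset.range N) J,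
    Finset.sum_ite_eq' (Finset.range N) j, if_pos (Finset.mem_range.mpr (by omega)),
    if_pos (Finset.mem_range.mpr (by omega))] at key
  have heq : (⟪p J - p (J + 1) + h • Gq
      + ∑ i ∈ Finset.range m, b i J • gradient (γ i) (q J), u⟫ : ℝ)
      = (⟪Gq, u⟫ * h + (∑ i ∈ Finset.range m, ⟪gradient (γ i) (q J), u⟫ * b i J)
          + ⟪p (J + 1), h⁻¹ • (-u)⟫ * h) + ⟪p J, h⁻¹ • u⟫ * h := by
    simp only [inner_add_left, inner_sub_left, real_inner_smul_left, real_inner_smul_right,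
      inner_neg_right, sum_inner]
    rw [Finset.sum_congr rfl (fun i _ => (mul_comm (b i J) (⟪gradient (γ i) (q J), u⟫ : ℝ)))]
    field_simp
    ring
  rw [heq]
  exact key

/-- The stochastic variational Euler scheme on `ℝⁿ` is characterized by
stationarity of the discrete Hamilton–Pontryagin action sum: all partial
Fréchet derivatives of `𝔊_d^e` with respect to `q_j` (`1 ≤ j ≤ N−1`),
`v_j` (`1 ≤ j ≤ N−1`) and `p_j` (`1 ≤ j ≤ N`) vanish iff the stochastic
discrete Hamilton–Pontryagin equations hold. -/
theorem stochastic_variational_euler_characterization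
    (n m N : ℕ) (hn : 1 ≤ n) (hN : 2 ≤ N) (h : ℝ) (hh : 0 < h)
    (L : EuclideanSpace ℝ (Fin n) × EuclideanSpace ℝ (Fin n) → ℝ)
    (hL : ContDiff ℝ 1 L)
    (γ : ℕ → EuclideanSpace ℝ (Fin n) → ℝ)
    (hγ : ∀ i < m, ContDiff ℝ 1 (γ i))
    (b : ℕ → ℕ → ℝ)
    (q v p : ℕ → EuclideanSpace ℝ (Fin n)) :
    ((∀ j, 1 ≤ j → j < N → ∀ u : EuclideanSpace ℝ (Fin n),
        deriv (fun ε : ℝ => discreteHPAction n m N h L γ b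
          (Function.update q j (q j + ε • u)) v p) 0 = 0) ∧
     (∀ j, 1 ≤ j → j < N → ∀ u : EuclideanSpace ℝ (Fin n),
        deriv (fun ε : ℝ => discreteHPAction n m N h L γ b
          q (Function.update v j (v j + ε • u)) p) 0 = 0) ∧
     (∀ j, 1 ≤ j → j ≤ N → ∀ u : EuclideanSpace ℝ (Fin n),
        deriv (fun ε : ℝ => discreteHPAction n m N h L γ b
          q v (Function.update p j (p j + ε • u))) 0 = 0))
    ↔
    ((∀ j, 1 ≤ j → j ≤ N → q j = q (j - 1) + h • v j) ∧
     (∀ j, 1 ≤ j → j < N →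
        p j = gradient (fun u => L (q j, u)) (v j)) ∧
     (∀ j, 1 ≤ j → j < N →
        p (j + 1) = p j + h • gradient (fun x => L (x, v j)) (q j)
          + ∑ i ∈ Finset.range m, b i j • gradient (γ i) (q j))) := by
  have hne : h ≠ 0 := hh.ne'
  constructor
  · rintro ⟨Hq, Hv, Hp⟩
    refine ⟨?_, ?_, ?_⟩
    · intro j hj1 hjN
      set c : EuclideanSpace ℝ (Fin n) := h⁻¹ • (q j - q (j - 1)) - v j with hcdef
      have h0 : (⟪c, c⟫ : ℝ) * h = 0 := by
        rw [← (hasDerivAt_action_p n m N h L γ b q v p j hj1 hjN c).deriv]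
        exact Hp j hj1 hjN c
      have hc : c = 0 := by
        rcases mul_eq_zero.mp h0 with h1 | h1
        · exact inner_self_eq_zero.mp h1
        · exact absurd h1 hne
      have h1 : h⁻¹ • (q j - q (j - 1)) = v j := by rwa [sub_eq_zero] at hc
      have h2 : q j - q (j - 1) = h • v j := by
        calc q j - q (j - 1) = h • (h⁻¹ • (q j - q (j - 1))) := by
              rw [smul_smul, mul_inv_cancel₀ hne, one_smul]
          _ = h • v j := by rw [h1]
      rw [← h2]; abel
    · intro j hj1 hjN
      set c : EuclideanSpace ℝ (Fin n) :=
        gradient (fun w => L (q j, w)) (v j) - p j with hcdef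
      have h0 : (⟪c, c⟫ : ℝ) * h = 0 := by
        rw [← (hasDerivAt_action_v n m N h L hL γ b q v p j hj1 hjN c).deriv]
        exact Hv j hj1 hjN c
      have hc : c = 0 := by
        rcases mul_eq_zero.mp h0 with h1 | h1
        · exact inner_self_eq_zero.mp h1
        · exact absurd h1 hne
      have := sub_eq_zero.mp hc
      exact this.symm
    · intro j hj1 hjN
      set c : EuclideanSpace ℝ (Fin n) :=
        p j - p (j + 1) + h • gradient (fun x => L (x, v j)) (q j)
          + ∑ i ∈ Finset.range m, b i j • gradient (γ i) (q j) with hcdef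
      have h0 : (⟪c, c⟫ : ℝ) = 0 := by
        rw [← (hasDerivAt_action_q n m N h hne L hL γ hγ b q v p j hj1 hjN c).deriv]
        exact Hq j hj1 hjN c
      have hc : c = 0 := inner_self_eq_zero.mp h0
      have : p (j + 1) = p (j + 1) + c := by rw [hc, add_zero]
      rw [this, hcdef]; abel
  · rintro ⟨Eq1, Eq2, Eq3⟩
    refine ⟨?_, ?_, ?_⟩
    · intro j hj1 hjN u
      rw [(hasDerivAt_action_q n m N h hne L hL γ hγ b q v p j hj1 hjN u).deriv]
      have hc : p j - p (j + 1) + h • gradient (fun x => L (x, v j)) (q j)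
          + ∑ i ∈ Finset.range m, b i j • gradient (γ i) (q j) = 0 := by
        rw [Eq3 j hj1 hjN]; abel
      rw [hc, inner_zero_left]
    · intro j hj1 hjN u
      rw [(hasDerivAt_action_v n m N h L hL γ b q v p j hj1 hjN u).deriv]
      have hc : gradient (fun w => L (q j, w)) (v j) - p j = 0 := by
        rw [Eq2 j hj1 hjN, sub_self]
      rw [hc, inner_zero_left, zero_mul]
    · intro j hj1 hjN u
      rw [(hasDerivAt_action_p n m N h L γ b q v p j hj1 hjN u).deriv]
      have h2 : q j - q (j - 1) = h • v j := by rw [Eq1 j hj1 hjN]; abel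
      have hc : h⁻¹ • (q j - q (j - 1)) - v j = 0 := by
        rw [h2, smul_smul, inv_mul_cancel₀ hne, one_smul, sub_self]
      rw [hc, inner_zero_left, zero_mul]
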